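/- arXiv:math/0610288 — 10 statements merged into one kernel-verified Lean document; each statement's English description precedes it below -/
import Mathlib

section
/- For all Z₁, Z₂, z₁ ∈ ℂ, setting z₂ = exp(Z₁·conj(z₁))·z₁, one has exp((Z₁ + exp(conj(Z₁)·z₁)·Z₂)·conj(z₁))·z₁ = exp(Z₂·conj(z₂))·z₂. In other words, in Dazord's groupoid the target of the product (Z₁,z₁)·(Z₂,z₂) = (Z₁ + exp(conj(Z₁)·z₁)·Z₂, z₁) equals the target of (Z₂,z₂) whenever z₂ = t(Z₁,z₁). -/
open Complex

/-- In Dazord's groupoid with target `t(Z,z) = exp(Z·conj z)·z` and product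
`(Z₁,z₁)·(Z₂,z₂) = (Z₁ + exp(conj Z₁·z₁)·Z₂, z₁)` (defined when `z₂ = t(Z₁,z₁)`),
the target of the product equals the target of `(Z₂,z₂)`. -/
theorem dazord_target_of_mul (Z₁ Z₂ z₁ z₂ : ℂ)
    (hz₂ : z₂ = exp (Z₁ * (starRingEnd ℂ) z₁) * z₁) :
    exp ((Z₁ + exp ((starRingEnd ℂ) Z₁ * z₁) * Z₂) * (starRingEnd ℂ) z₁) * z₁
      = exp (Z₂ * (starRingEnd ℂ) z₂) * z₂ := by
  subst hz₂
  rw [map_mul, ← Complex.exp_conj, map_mul, Complex.conj_conj]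
  rw [add_mul, Complex.exp_add]
  ring
end

section
/- For all Z₁, Z₂, z₁ ∈ ℂ, setting z₂ = exp(Z₁·conj(z₁))·z₁, one has exp(conj(Z₁ + exp(conj(Z₁)·z₁)·Z₂)·z₁) = exp(conj(Z₁)·z₁)·exp(conj(Z₂)·z₂). Consequently the product of Dazord's groupoid is associative: for composable triples (Z₁,z₁), (Z₂,z₂), (Z₃,z₃) (i.e. z₂ = t(Z₁,z₁) and z₃ = t(Z₂,z₂)), ((Z₁,z₁)·(Z₂,z₂))·(Z₃,z₃) = (Z₁,z₁)·((Z₂,z₂)·(Z₃,z₃)). -/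
open Complex

/-- The product of Dazord's groupoid: `(Z₁,z₁)·(Z₂,z₂) = (Z₁ + exp(conj Z₁·z₁)·Z₂, z₁)`. -/
noncomputable def dazordMul (p q : ℂ × ℂ) : ℂ × ℂ :=
  (p.1 + exp ((starRingEnd ℂ) p.1 * p.2) * q.1, p.2)

/-- The target map of Dazord's groupoid: `t(Z,z) = exp(Z·conj z)·z`. -/
noncomputable def dazordTarget (p : ℂ × ℂ) : ℂ :=
  exp (p.1 * (starRingEnd ℂ) p.2) * p.2

/-- For `z₂ = t(Z₁,z₁)` one has
`exp(conj(Z₁ + exp(conj Z₁·z₁)·Z₂)·z₁) = exp(conj Z₁·z₁)·exp(conj Z₂·z₂)`, and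
consequently Dazord's product is associative on composable triples. -/
theorem dazord_mul_assoc (Z₁ Z₂ Z₃ z₁ z₂ z₃ : ℂ)
    (h₂ : z₂ = dazordTarget (Z₁, z₁)) (h₃ : z₃ = dazordTarget (Z₂, z₂)) :
    exp ((starRingEnd ℂ) (Z₁ + exp ((starRingEnd ℂ) Z₁ * z₁) * Z₂) * z₁)
        = exp ((starRingEnd ℂ) Z₁ * z₁) * exp ((starRingEnd ℂ) Z₂ * z₂) ∧
      dazordMul (dazordMul (Z₁, z₁) (Z₂, z₂)) (Z₃, z₃)
        = dazordMul (Z₁, z₁) (dazordMul (Z₂, z₂) (Z₃, z₃)) := by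
  have key : exp ((starRingEnd ℂ) (Z₁ + exp ((starRingEnd ℂ) Z₁ * z₁) * Z₂) * z₁)
      = exp ((starRingEnd ℂ) Z₁ * z₁) * exp ((starRingEnd ℂ) Z₂ * z₂) := by
    rw [h₂]
    simp only [dazordTarget, map_add, map_mul, ← exp_conj, map_mul, Complex.conj_conj]
    rw [add_mul, exp_add]
    ring_nf
  refine ⟨key, ?_⟩
  simp only [dazordMul, Prod.mk.injEq, and_true]
  rw [key]
  ring
end

section
/- For all Z, z ∈ ℂ, the element ι(Z,z) := (−exp(−conj(Z)·z)·Z, exp(Z·conj(z))·z) is a two-sided inverse of (Z,z) in Dazord's groupoid: (i) t(ι(Z,z)) = z, i.e. exp(−exp(−conj(Z)·z)·Z·conj(exp(Z·conj(z))·z))·exp(Z·conj(z))·z = z; (ii) Z + exp(conj(Z)·z)·(−exp(−conj(Z)·z)·Z) = 0, so (Z,z)·ι(Z,z) = (0,z); and (iii) −exp(−conj(Z)·z)·Z + exp(conj(−exp(−conj(Z)·z)·Z)·exp(Z·conj(z))·z)·Z = 0, so ι(Z,z)·(Z,z) = (0, exp(Z·conj(z))·z). -/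
open Complex

/-- The element `ι(Z,z) = (−exp(−conj Z·z)·Z, exp(Z·conj z)·z)` is a two-sided inverse
of `(Z,z)` in Dazord's groupoid:
(i) its target is `z`; (ii) `(Z,z)·ι(Z,z)` has first component `0`;
(iii) `ι(Z,z)·(Z,z)` has first component `0`. -/
theorem dazord_inverse (Z z : ℂ) :
    (exp (-exp (-((starRingEnd ℂ) Z * z)) * Z *
          (starRingEnd ℂ) (exp (Z * (starRingEnd ℂ) z) * z)) *
        (exp (Z * (starRingEnd ℂ) z) * z) = z) ∧
    (Z + exp ((starRingEnd ℂ) Z * z) * (-exp (-((starRingEnd ℂ) Z * z)) * Z) = 0) ∧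
    (-exp (-((starRingEnd ℂ) Z * z)) * Z +
        exp ((starRingEnd ℂ) (-exp (-((starRingEnd ℂ) Z * z)) * Z) *
          (exp (Z * (starRingEnd ℂ) z) * z)) * Z = 0) := by
  have hc : ∀ w : ℂ, (starRingEnd ℂ) (exp w) = exp ((starRingEnd ℂ) w) :=
    fun w => (Complex.exp_conj w).symm
  refine ⟨?_, ?_, ?_⟩
  · simp only [map_mul, map_neg, hc, map_mul, Complex.conj_conj]
    have : -exp (-((starRingEnd ℂ) Z * z)) * Z *
        (exp ((starRingEnd ℂ) Z * z) * (starRingEnd ℂ) z)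
        = -(Z * (starRingEnd ℂ) z) * (exp (-((starRingEnd ℂ) Z * z)) * exp ((starRingEnd ℂ) Z * z)) := by ring
    rw [this, ← Complex.exp_add, neg_add_cancel, Complex.exp_zero, mul_one,
      ← mul_assoc, ← Complex.exp_add, neg_add_cancel, Complex.exp_zero, one_mul]
  · have : exp ((starRingEnd ℂ) Z * z) * (-exp (-((starRingEnd ℂ) Z * z)) * Z)
        = -(exp ((starRingEnd ℂ) Z * z) * exp (-((starRingEnd ℂ) Z * z)) * Z) := by ring
    rw [this, ← Complex.exp_add, add_neg_cancel, Complex.exp_zero, one_mul, add_neg_cancel]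
  · simp only [map_mul, map_neg, hc, map_neg, Complex.conj_conj]
    have : -exp (-(Z * (starRingEnd ℂ) z)) * (starRingEnd ℂ) Z *
        (exp (Z * (starRingEnd ℂ) z) * z)
        = -((starRingEnd ℂ) Z * z) * (exp (-(Z * (starRingEnd ℂ) z)) * exp (Z * (starRingEnd ℂ) z)) := by ring
    rw [this, ← Complex.exp_add, neg_add_cancel, Complex.exp_zero, mul_one]
    ring_nf
end

section
/- For every Z ∈ ℂ and λ ∈ ℝ there exist unique real numbers a, b, M such that (λ : ℂ) = b·exp(M·b) and Complex.I·a = Z·exp(M·b) + M. (Explicitly, b = λ·exp(Re(Z)·λ), M = −Re(Z)·exp(−Re(Z)·λ), a = Im(Z)·exp(−Re(Z)·λ).) -/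
/-- Every class in the quotient `Z(R⁽⁰⁾)` of Dazord's groupoid has a unique normal form:
for every `Z ∈ ℂ` and `λ ∈ ℝ` there exist unique reals `a, b, M` with
`(λ : ℂ) = b·exp(M·b)` and `I·a = Z·exp(M·b) + M`. -/
theorem dazord_quotient_normal_form (Z : ℂ) (lam : ℝ) :
    ∃! p : ℝ × ℝ × ℝ,
      (lam : ℂ) = (p.2.1 : ℂ) * Complex.exp ((p.2.2 : ℂ) * (p.2.1 : ℂ)) ∧
        Complex.I * (p.1 : ℂ) =
          Z * Complex.exp ((p.2.2 : ℂ) * (p.2.1 : ℂ)) + (p.2.2 : ℂ) := by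
  set x := Z.re with hx
  set y := Z.im with hy
  refine ⟨(y * Real.exp (-(x*lam)), lam * Real.exp (x*lam),
      -x * Real.exp (-(x*lam))), ⟨?_, ?_⟩, ?_⟩
  · have hmb : (-x * Real.exp (-(x*lam))) * (lam * Real.exp (x*lam)) = -(x*lam) := by
      have : Real.exp (-(x*lam)) * Real.exp (x*lam) = 1 := by
        rw [← Real.exp_add]; simp
      linear_combination (-(x*lam)) * this
    have : ((lam * Real.exp (x*lam) : ℝ) : ℂ) *
        Complex.exp (((-x * Real.exp (-(x*lam)) : ℝ) : ℂ) * ((lam * Real.exp (x*lam) : ℝ) : ℂ))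
        = (lam : ℂ) := by
      rw [← Complex.ofReal_mul, hmb, ← Complex.ofReal_exp, ← Complex.ofReal_mul]
      norm_cast
      rw [mul_assoc, ← Real.exp_add]
      simp
    simpa using this.symm
  · have hmb : (-x * Real.exp (-(x*lam))) * (lam * Real.exp (x*lam)) = -(x*lam) := by
      have : Real.exp (-(x*lam)) * Real.exp (x*lam) = 1 := by
        rw [← Real.exp_add]; simp
      linear_combination (-(x*lam)) * this
    have hZ : Z = (x : ℂ) + (y : ℂ) * Complex.I := (Complex.re_add_im Z).symm
    rw [show (((-x * Real.exp (-(x*lam)) : ℝ)) : ℂ) * ((lam * Real.exp (x*lam) : ℝ) : ℂ)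
        = ((-(x*lam) : ℝ) : ℂ) by rw [← Complex.ofReal_mul, hmb],
      ← Complex.ofReal_exp, hZ]
    push_cast
    ring
  · rintro ⟨a, b, M⟩ ⟨h1, h2⟩
    simp only at h1 h2
    have hE : Complex.exp ((M : ℂ) * (b : ℂ)) = ((Real.exp (M * b) : ℝ) : ℂ) := by
      rw [Complex.ofReal_exp, Complex.ofReal_mul]
    rw [hE] at h1 h2
    set e := Real.exp (M * b) with he
    have hb : lam = b * e := by exact_mod_cast h1
    have hre := congrArg Complex.re h2
    have him := congrArg Complex.im h2
    simp [Complex.mul_re, Complex.mul_im, Complex.add_re, Complex.add_im] at hre him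
    -- hre : 0 = x * e + M, him : a = y * e
    have hM : M = -x * e := by
      simp [← hx] at hre; linarith
    have hee : e = Real.exp (-(x*lam)) := by
      rw [he]
      congr 1
      rw [hM, hb]; ring
    have hepos : (0:ℝ) < e := he ▸ Real.exp_pos _
    have hbval : b = lam * Real.exp (x*lam) := by
      have h1 : e * Real.exp (x*lam) = 1 := by
        rw [hee, ← Real.exp_add]; simp
      linear_combination (-(Real.exp (x*lam))) * hb + (-b) * h1
    have haval : a = y * Real.exp (-(x*lam)) := by
      rw [← hee, ← hx, ← hy] at *
      simpa [← hy] using him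
    have hMval : M = -x * Real.exp (-(x*lam)) := by rw [hM, hee]
    simp [Prod.ext_iff, haval, hbval, hMval]
end

section
/- Let φ₁(a,b) = b·cos(a·b) and φ₂(a,b) = b·sin(a·b) for (a,b) ∈ ℝ². Then for all a, b ∈ ℝ: (∂φ₂/∂a)(a,b)·(∂φ₁/∂b)(a,b) − (∂φ₁/∂a)(a,b)·(∂φ₂/∂b)(a,b) = b², and moreover φ₁(a,b)² + φ₂(a,b)² = b². (Thus the pullback under φ = (φ₁,φ₂) of the function x² + y² equals the Poisson bracket of the components of φ for the canonical symplectic bracket on ℝ²; i.e. φ is a Poisson map onto (ℝ², {x,y} = x²+y²).) -/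
/-- For `φ₁(a,b) = b·cos(ab)`, `φ₂(a,b) = b·sin(ab)` one has
`∂ₐφ₂·∂bφ₁ − ∂ₐφ₁·∂bφ₂ = b²` and `φ₁² + φ₂² = b²`, i.e. `φ = (φ₁,φ₂)` is a Poisson
map onto `(ℝ², {x,y} = x² + y²)`. -/
theorem phi_poisson_map (a b : ℝ) :
    deriv (fun a' => b * Real.sin (a' * b)) a *
          deriv (fun b' => b' * Real.cos (a * b')) b -
        deriv (fun a' => b * Real.cos (a' * b)) a *
          deriv (fun b' => b' * Real.sin (a * b')) b = b ^ 2 ∧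
      (b * Real.cos (a * b)) ^ 2 + (b * Real.sin (a * b)) ^ 2 = b ^ 2 := by
  have h1 : deriv (fun a' => b * Real.sin (a' * b)) a = b * (Real.cos (a * b) * b) := by
    have : HasDerivAt (fun a' : ℝ => b * Real.sin (a' * b)) (b * (Real.cos (a * b) * b)) a := by
      simpa using ((Real.hasDerivAt_sin (a * b)).comp a ((hasDerivAt_id a).mul_const b)).const_mul b
    exact this.deriv
  have h2 : deriv (fun b' => b' * Real.cos (a * b')) b
      = 1 * Real.cos (a * b) + b * (-Real.sin (a * b) * a) := by
    have : HasDerivAt (fun b' : ℝ => b' * Real.cos (a * b'))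
        (1 * Real.cos (a * b) + b * (-Real.sin (a * b) * a)) b := by
      simpa [Pi.mul_def, Function.comp_def] using (hasDerivAt_id b).mul ((Real.hasDerivAt_cos (a * b)).comp b ((hasDerivAt_id b).const_mul a))
    exact this.deriv
  have h3 : deriv (fun a' => b * Real.cos (a' * b)) a = b * (-Real.sin (a * b) * b) := by
    have : HasDerivAt (fun a' : ℝ => b * Real.cos (a' * b)) (b * (-Real.sin (a * b) * b)) a := by
      simpa using ((Real.hasDerivAt_cos (a * b)).comp a ((hasDerivAt_id a).mul_const b)).const_mul b
    exact this.deriv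
  have h4 : deriv (fun b' => b' * Real.sin (a * b')) b
      = 1 * Real.sin (a * b) + b * (Real.cos (a * b) * a) := by
    have : HasDerivAt (fun b' : ℝ => b' * Real.sin (a * b'))
        (1 * Real.sin (a * b) + b * (Real.cos (a * b) * a)) b := by
      simpa [Pi.mul_def, Function.comp_def] using (hasDerivAt_id b).mul ((Real.hasDerivAt_sin (a * b)).comp b ((hasDerivAt_id b).const_mul a))
    exact this.deriv
  have hpy : Real.cos (a * b) ^ 2 + Real.sin (a * b) ^ 2 = 1 := Real.cos_sq_add_sin_sq _
  constructor
  · rw [h1, h2, h3, h4]; nlinarith [hpy]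
  · nlinarith [hpy]
end

section
/- Let φ : ℝ × ℝ → ℂ, φ(a,b) = (b : ℂ)·exp(Complex.I·a·b). For every (a,b) ∈ ℝ × ℝ with b ≠ 0, the Fréchet derivative of φ at (a,b) exists and is a linear isomorphism from ℝ × ℝ onto ℂ (as real vector spaces); in particular, φ is a local homeomorphism (local diffeomorphism) at every point (a,b) with b ≠ 0. -/
/-- The resolving map `φ(a,b) = b·exp(i·a·b)` of the paper. -/
noncomputable def phiMap (p : ℝ × ℝ) : ℂ :=
  (p.2 : ℂ) * Complex.exp (Complex.I * (p.1 : ℂ) * (p.2 : ℂ))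

/-- At every point `(a,b)` with `b ≠ 0`, the Fréchet derivative of `φ` exists and is a
(continuous) real-linear isomorphism from `ℝ × ℝ` onto `ℂ`; hence `φ` is étale there. -/
theorem phiMap_etale (p : ℝ × ℝ) (hp : p.2 ≠ 0) :
    ∃ L : (ℝ × ℝ) ≃L[ℝ] ℂ, HasFDerivAt phiMap (L : (ℝ × ℝ) →L[ℝ] ℂ) p := by
  set F : (ℝ × ℝ) →L[ℝ] ℂ := Complex.ofRealCLM.comp (ContinuousLinearMap.fst ℝ ℝ ℝ) with hF
  set S : (ℝ × ℝ) →L[ℝ] ℂ := Complex.ofRealCLM.comp (ContinuousLinearMap.snd ℝ ℝ ℝ) with hS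
  set E : ℂ := Complex.exp (Complex.I * ((p.1 : ℂ) * (p.2 : ℂ))) with hE
  set D : (ℝ × ℝ) →L[ℝ] ℂ :=
    (p.2 : ℂ) • (E • (Complex.I • ((p.1 : ℂ) • S + (p.2 : ℂ) • F))) + E • S with hD
  have D1 : HasFDerivAt (fun q : ℝ × ℝ => ((q.1 : ℂ))) F p :=
    Complex.ofRealCLM.hasFDerivAt.comp p (hasFDerivAt_fst)
  have D2 : HasFDerivAt (fun q : ℝ × ℝ => ((q.2 : ℂ))) S p :=
    Complex.ofRealCLM.hasFDerivAt.comp p (hasFDerivAt_snd)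
  have hab := D1.mul D2
  have hIab := hab.const_mul Complex.I
  have hexp := hIab.cexp
  have hfun : phiMap = (fun y : ℝ × ℝ =>
      (y.2 : ℂ) * Complex.exp (Complex.I * ((y.1 : ℂ) * (y.2 : ℂ)))) := by
    funext y; simp [phiMap, mul_assoc]
  have hphi : HasFDerivAt phiMap D p := by
    rw [hfun]
    convert D2.mul hexp using 1 <;> rfl
  -- evaluation of D
  have hDval : ∀ u v : ℝ, D (u, v) =
      E * (Complex.I * (p.1 : ℂ) * (p.2 : ℂ) * (v : ℂ)
        + Complex.I * (p.2 : ℂ) * (p.2 : ℂ) * (u : ℂ) + (v : ℂ)) := by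
    intro u v
    simp [hD, hF, hS]
    ring
  have hE0 : E ≠ 0 := Complex.exp_ne_zero _
  have hinj : Function.Injective D := by
    rw [injective_iff_map_eq_zero]
    rintro ⟨u, v⟩ h
    rw [hDval u v, mul_eq_zero] at h
    rcases h with h | h
    · exact absurd h hE0
    · have hre := congrArg Complex.re h
      have him := congrArg Complex.im h
      simp at hre him
      -- hre : v = 0 ; him : a*b*v + b*b*u = 0 (roughly)
      subst hre
      simp at him
      rcases him with him | him
      · exact absurd him hp
      · simp [him]
  have hfin : Module.finrank ℝ (ℝ × ℝ) = Module.finrank ℝ ℂ := by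
    simp [Complex.finrank_real_complex]
  let Lequiv : (ℝ × ℝ) ≃ₗ[ℝ] ℂ :=
    LinearEquiv.ofBijective D.toLinearMap
      ⟨hinj, (LinearMap.injective_iff_surjective_of_finrank_eq_finrank hfin).mp hinj⟩
  refine ⟨Lequiv.toContinuousLinearEquiv, ?_⟩
  have : (Lequiv.toContinuousLinearEquiv : (ℝ × ℝ) →L[ℝ] ℂ) = D := by
    rfl
  rw [this]
  exact hphi
end

section
/- For all a, b ∈ ℝ with b ≠ 0 and all n ∈ ℤ: ((−1)ⁿ·b : ℂ)·exp(Complex.I·((−1)ⁿ·a + n·π/b)·((−1)ⁿ·b)) = (b : ℂ)·exp(Complex.I·a·b). In other words, φ ∘ T_n = φ on {b ≠ 0}, where φ(a,b) = b·exp(i·a·b) and T_n(a,b) = ((−1)ⁿa + nπ/b, (−1)ⁿb); hence φ descends to a well-defined map φ₁ on the quotient ℝ²/∼₁′, and the projection Π is a morphism of resolutions. -/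
/-- On `{b ≠ 0}` one has `φ ∘ T_n = φ`, where `φ(a,b) = b·exp(i·a·b)` and
`T_n(a,b) = ((−1)ⁿa + nπ/b, (−1)ⁿb)`. -/
theorem phi_comp_Tn (a b : ℝ) (hb : b ≠ 0) (n : ℤ) :
    ((((-1 : ℝ) ^ n * b : ℝ)) : ℂ) *
        Complex.exp (Complex.I * (((-1 : ℝ) ^ n * a + n * Real.pi / b : ℝ) : ℂ) *
          (((-1 : ℝ) ^ n * b : ℝ) : ℂ)) =
      (b : ℂ) * Complex.exp (Complex.I * (a : ℂ) * (b : ℂ)) := by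
  have hb' : (b : ℂ) ≠ 0 := by exact_mod_cast hb
  have key : Complex.I * (((-1 : ℝ) ^ n * a + n * Real.pi / b : ℝ) : ℂ) *
      (((-1 : ℝ) ^ n * b : ℝ) : ℂ)
      = Complex.I * a * b + (n * (-1 : ℂ) ^ n) * (Real.pi * Complex.I) := by
    push_cast
    have h2 : ((-1 : ℂ) ^ n) ^ 2 = 1 := by
      rw [← zpow_natCast ((-1:ℂ)^n) 2, ← zpow_mul]
      exact Even.neg_one_zpow ⟨n, by push_cast; ring⟩
    field_simp
    ring_nf
    rw [show ((-1:ℂ)^n)^2 = 1 from h2]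
    ring
  rw [key, Complex.exp_add]
  have hmz : ∃ m : ℤ, (n * (-1 : ℂ) ^ n : ℂ) = (m : ℂ) ∧ (-1:ℂ)^m = (-1:ℂ)^n := by
    refine ⟨n * (-1) ^ n.natAbs, ?_, ?_⟩
    · push_cast
      rcases Int.even_or_odd n with he | ho
      · rw [he.neg_one_zpow, (Int.natAbs_even.mpr he).neg_one_pow]
      · rw [Odd.neg_one_zpow ho, (Int.natAbs_odd.mpr ho).neg_one_pow]
    · rcases Int.even_or_odd n with he | ho
      · rw [he.neg_one_zpow]
        have : Even (n * (-1) ^ n.natAbs) := he.mul_right _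
        rw [this.neg_one_zpow]
      · rw [Odd.neg_one_zpow ho]
        have : Odd (n * (-1) ^ n.natAbs) := ho.mul (by
          rw [(Int.natAbs_odd.mpr ho).neg_one_pow]; exact ⟨-1, by ring⟩)
        rw [Odd.neg_one_zpow this]
  obtain ⟨m, hm, hmn⟩ := hmz
  rw [hm, Complex.exp_int_mul, Complex.exp_pi_mul_I, hmn]
  push_cast
  have h2 : (-1 : ℂ) ^ n * (-1 : ℂ) ^ n = 1 := by
    rw [← zpow_add₀ (by norm_num : (-1:ℂ) ≠ 0)]
    exact Even.neg_one_zpow ⟨n, by ring⟩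
  calc ((-1:ℂ)^n * b) * (Complex.exp (Complex.I*a*b) * (-1:ℂ)^n)
      = ((-1:ℂ)^n * (-1:ℂ)^n) * (b * Complex.exp (Complex.I*a*b)) := by ring
    _ = b * Complex.exp (Complex.I*a*b) := by rw [h2, one_mul]
end

section
/- For all a, b, a', b' ∈ ℝ with b ≠ 0 and b' ≠ 0: (b : ℂ)·exp(Complex.I·a·b) = (b' : ℂ)·exp(Complex.I·a'·b') if and only if there exists n ∈ ℤ with b' = (−1)ⁿ·b and a' = (−1)ⁿ·a + n·π/b. (This says the fibers of φ over ℂ∖{0} are exactly the orbits of the identifications T_n, so that φ₁ is injective on φ₁⁻¹(S) and (Z(R⁽¹⁾), φ₁) is a genuine resolution.) -/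
open Complex

/-- `exp(I x) = exp(I y)` iff `x = y + 2kπ` for some integer `k`. -/
lemma exp_I_real_eq (x y : ℝ) :
    Complex.exp (Complex.I * (x : ℂ)) = Complex.exp (Complex.I * (y : ℂ)) ↔
      ∃ k : ℤ, x = y + 2 * k * Real.pi := by
  rw [Complex.exp_eq_exp_iff_exists_int]
  constructor
  · rintro ⟨k, hk⟩
    refine ⟨k, ?_⟩
    have h2 : (x : ℂ) = (y : ℂ) + 2 * k * Real.pi := by
      have := hk
      have hI := Complex.I_ne_zero
      field_simp at this ⊢
      have : Complex.I * (x : ℂ) = Complex.I * ((y : ℂ) + 2 * k * Real.pi) := by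
        rw [hk]; ring
      linear_combination mul_left_cancel₀ hI this
    exact_mod_cast h2
  · rintro ⟨k, hk⟩
    refine ⟨k, ?_⟩
    rw [hk]; push_cast; ring

/-- The fibers of `φ(a,b) = b·exp(i·a·b)` over `ℂ∖{0}` are exactly the orbits of the
identifications `T_n(a,b) = ((−1)ⁿa + nπ/b, (−1)ⁿb)`. -/
theorem phi_fibers (a b a' b' : ℝ) (hb : b ≠ 0) (hb' : b' ≠ 0) :
    (b : ℂ) * Complex.exp (Complex.I * (a : ℂ) * (b : ℂ)) =
        (b' : ℂ) * Complex.exp (Complex.I * (a' : ℂ) * (b' : ℂ)) ↔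
      ∃ n : ℤ, b' = (-1 : ℝ) ^ n * b ∧ a' = (-1 : ℝ) ^ n * a + n * Real.pi / b := by
  have hbC : (b : ℂ) ≠ 0 := Complex.ofReal_ne_zero.mpr hb
  constructor
  · intro h
    -- equal absolute values
    have habs : |b| = |b'| := by
      have := congrArg (‖·‖) h
      simpa [map_mul, Complex.norm_exp, Complex.mul_re, Complex.mul_im] using this
    rcases abs_eq_abs.mp habs.symm with hbe | hbe
    · -- b' = b
      rw [hbe] at h ⊢
      have h' := mul_left_cancel₀ hbC h
      have e1 : Complex.I * (a : ℂ) * (b : ℂ) = Complex.I * ((a * b : ℝ) : ℂ) := by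
        push_cast; ring
      have e2 : Complex.I * (a' : ℂ) * (b : ℂ) = Complex.I * ((a' * b : ℝ) : ℂ) := by
        push_cast; ring
      rw [e1, e2] at h'
      obtain ⟨k, hk⟩ := (exp_I_real_eq _ _).mp h'
      refine ⟨-(2 * k), ?_, ?_⟩
      · rw [zpow_neg, zpow_mul]; norm_num
      · rw [zpow_neg, zpow_mul]
        norm_num
        field_simp
        linarith [hk]
    · -- b' = -b
      rw [hbe] at h ⊢
      have h' : Complex.exp (Complex.I * ((a * b : ℝ) : ℂ)) =
          Complex.exp (Complex.I * ((Real.pi - a' * b : ℝ) : ℂ)) := by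
        have e1 : Complex.I * ((Real.pi - a' * b : ℝ) : ℂ) =
            (Real.pi : ℂ) * Complex.I + Complex.I * (a' : ℂ) * ((-b : ℝ) : ℂ) := by
          push_cast; ring
        have e2 : Complex.I * ((a * b : ℝ) : ℂ) = Complex.I * (a : ℂ) * (b : ℂ) := by
          push_cast; ring
        rw [e1, Complex.exp_add, Complex.exp_pi_mul_I, e2]
        refine mul_left_cancel₀ hbC ?_
        rw [h]
        push_cast
        ring
      obtain ⟨k, hk⟩ := (exp_I_real_eq _ _).mp h'
      refine ⟨2 * k + 1, ?_, ?_⟩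
      · rw [zpow_add₀ (by norm_num : (-1:ℝ) ≠ 0), zpow_mul]; norm_num
      · rw [zpow_add₀ (by norm_num : (-1:ℝ) ≠ 0), zpow_mul]
        norm_num
        field_simp
        linarith [hk]
  · rintro ⟨n, hb'', ha'⟩
    subst hb'' ha'
    rcases Int.even_or_odd n with ⟨k, hk⟩ | ⟨k, hk⟩
    · subst hk
      have hpow : (-1 : ℝ) ^ (k + k) = 1 := by
        rw [show k + k = 2 * k by ring, zpow_mul]; norm_num
      rw [hpow]
      have hexpo : Complex.I * ((1 * a + (k + k : ℤ) * Real.pi / b : ℝ) : ℂ) * ((1 * b : ℝ) : ℂ)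
          = Complex.I * (a : ℂ) * (b : ℂ) + k * (2 * Real.pi * Complex.I) := by
        push_cast
        field_simp
        ring
      rw [hexpo, Complex.exp_add, Complex.exp_int_mul_two_pi_mul_I]
      push_cast; ring
    · subst hk
      have hpow : (-1 : ℝ) ^ (2 * k + 1) = -1 := by
        rw [zpow_add₀ (by norm_num : (-1:ℝ) ≠ 0), zpow_mul]; norm_num
      rw [hpow]
      have hexpo : Complex.I * ((-1 * a + (2 * k + 1 : ℤ) * Real.pi / b : ℝ) : ℂ) *
            ((-1 * b : ℝ) : ℂ)
          = Complex.I * (a : ℂ) * (b : ℂ) + (Real.pi : ℂ) * Complex.I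
            + (-(k + 1) : ℤ) * (2 * Real.pi * Complex.I) := by
        push_cast
        field_simp
        ring
      rw [hexpo, Complex.exp_add, Complex.exp_add, Complex.exp_pi_mul_I,
        Complex.exp_int_mul_two_pi_mul_I]
      push_cast; ring
end

section
/- Let α ∈ ℝ, Z ∈ ℂ and λ ∈ ℝ with λ ≠ 0. Then (λ : ℂ)·exp(Z·λ) belongs to the real line L_α = {(r : ℂ)·exp(Complex.I·α) : r ∈ ℝ} if and only if there exists n ∈ ℤ with λ·Im(Z) − α = n·π. -/
/-- For `λ ≠ 0` real, `λ·exp(Z·λ)` lies on the line `L_α = e^{iα}·ℝ` if and only if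
`λ·Im(Z) − α ∈ π·ℤ`. -/
theorem target_mem_line_iff (α : ℝ) (Z : ℂ) (lam : ℝ) (hlam : lam ≠ 0) :
    ((lam : ℂ) * Complex.exp (Z * (lam : ℂ)) ∈
        {w : ℂ | ∃ r : ℝ, w = (r : ℂ) * Complex.exp (Complex.I * (α : ℂ))}) ↔
      ∃ n : ℤ, lam * Z.im - α = n * Real.pi := by
  have hexp : Complex.exp (Complex.I * (α : ℂ)) ≠ 0 := Complex.exp_ne_zero _
  have him : ((lam : ℂ) * Complex.exp (Z * (lam : ℂ) - Complex.I * (α : ℂ))).im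
      = lam * (Real.exp (Z.re * lam) * Real.sin (Z.im * lam - α)) := by
    simp [Complex.mul_im, Complex.exp_im, Complex.exp_re, Complex.sub_re,
      Complex.sub_im, Complex.mul_re]
  have hre : ((lam : ℂ) * Complex.exp (Z * (lam : ℂ) - Complex.I * (α : ℂ))).re
      = lam * (Real.exp (Z.re * lam) * Real.cos (Z.im * lam - α)) := by
    simp [Complex.mul_im, Complex.exp_im, Complex.exp_re, Complex.sub_re,
      Complex.sub_im, Complex.mul_re]
  have hsin : (∃ n : ℤ, lam * Z.im - α = n * Real.pi)
      ↔ Real.sin (Z.im * lam - α) = 0 := by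
    rw [Real.sin_eq_zero_iff]
    constructor
    · rintro ⟨n, hn⟩; exact ⟨n, by linarith⟩
    · rintro ⟨n, hn⟩; exact ⟨n, by linarith⟩
  constructor
  · rintro ⟨r, hr⟩
    have h1 : (lam : ℂ) * Complex.exp (Z * (lam : ℂ) - Complex.I * (α : ℂ)) = r := by
      rw [Complex.exp_sub, ← mul_div_assoc]
      rw [div_eq_iff hexp, hr]
    have h2 := congrArg Complex.im h1
    rw [him] at h2
    simp only [Complex.ofReal_im] at h2
    have hexpne : Real.exp (Z.re * lam) ≠ 0 := (Real.exp_pos _).ne'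
    have hs : Real.sin (Z.im * lam - α) = 0 := by
      rcases mul_eq_zero.mp h2 with h | h
      · exact absurd h hlam
      rcases mul_eq_zero.mp h with h | h
      · exact absurd h hexpne
      · exact h
    exact hsin.mpr hs
  · intro hn
    have hs := hsin.mp hn
    refine ⟨lam * (Real.exp (Z.re * lam) * Real.cos (Z.im * lam - α)), ?_⟩
    have h1 : (lam : ℂ) * Complex.exp (Z * (lam : ℂ) - Complex.I * (α : ℂ))
        = ((lam * (Real.exp (Z.re * lam) * Real.cos (Z.im * lam - α)) : ℝ) : ℂ) := by
      apply Complex.ext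
      · rw [hre, Complex.ofReal_re]
      · rw [him, hs, Complex.ofReal_im]; ring
    calc (lam : ℂ) * Complex.exp (Z * (lam : ℂ))
        = (lam : ℂ) * Complex.exp (Z * (lam : ℂ) - Complex.I * (α : ℂ))
          * Complex.exp (Complex.I * (α : ℂ)) := by
          rw [mul_assoc, ← Complex.exp_add]; ring_nf
      _ = _ := by rw [h1]
end

section
/- Let α ∈ ℝ with α ∉ π·ℤ (i.e. there is no n ∈ ℤ with α = nπ). Let A = {(Z, λ) ∈ ℂ × ℝ : λ ≠ 0 and ∃ n ∈ ℤ, λ·Im(Z) − α = n·π}. Then the closure of A in ℂ × ℝ is disjoint from ℂ × {0}; equivalently, there are no sequences (Z_k) in ℂ and (λ_k) in ℝ∖{0} with (Z_k) convergent, λ_k → 0, and λ_k·Im(Z_k) − α ∈ π·ℤ for all k. -/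
/-- If `α ∉ π·ℤ`, the closure of
`A = {(Z,λ) : λ ≠ 0, λ·Im(Z) − α ∈ π·ℤ}` in `ℂ × ℝ` does not meet `ℂ × {0}`. -/
theorem closure_A_misses_zero_fiber (α : ℝ) (hα : ¬∃ n : ℤ, α = n * Real.pi) :
    closure {p : ℂ × ℝ | p.2 ≠ 0 ∧ ∃ n : ℤ, p.2 * p.1.im - α = n * Real.pi} ∩
        {p : ℂ × ℝ | p.2 = 0} = ∅ := by
  ext p
  simp only [Set.mem_inter_iff, Set.mem_setOf_eq, Set.mem_empty_iff_false, iff_false, not_and]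
  intro hp hp2
  set d : ℝ := |α / Real.pi - round (α / Real.pi)| with hd
  have hπ : (0 : ℝ) < Real.pi := Real.pi_pos
  have hd0 : 0 < d := by
    rw [hd, abs_pos, sub_ne_zero]
    intro h
    exact hα ⟨round (α / Real.pi), by field_simp at h ⊢; linarith [h]⟩
  -- for any integer n, |α + n*π| ≥ d * π
  have key : ∀ n : ℤ, d * Real.pi ≤ |α + n * Real.pi| := by
    intro n
    have := round_le (α / Real.pi) (-n)
    have h2 : |α / Real.pi - (-n : ℤ)| * Real.pi = |α + n * Real.pi| := by
      rw [← abs_of_pos hπ, ← abs_mul]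
      congr 1
      push_cast
      rw [abs_of_pos hπ]
      field_simp
      ring
    calc d * Real.pi ≤ |α / Real.pi - (-n : ℤ)| * Real.pi := by
          exact mul_le_mul_of_nonneg_right this (le_of_lt hπ)
      _ = |α + n * Real.pi| := h2
  set ε : ℝ := min 1 (d * Real.pi / (|p.1.im| + 1)) with hε
  have him : 0 < |p.1.im| + 1 := by positivity
  have hε0 : 0 < ε := lt_min one_pos (by positivity)
  obtain ⟨q, hq, hdq⟩ := Metric.mem_closure_iff.mp hp ε hε0
  obtain ⟨hq2, n, hn⟩ := hq
  -- dist bounds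
  have h1 : |q.2 - p.2| < ε := by
    calc |q.2 - p.2| = dist q.2 p.2 := (Real.dist_eq _ _).symm
      _ ≤ dist q p := le_max_right _ _
      _ < ε := by rwa [dist_comm] at hdq
  have h2 : |q.1.im - p.1.im| < ε := by
    calc |q.1.im - p.1.im| ≤ ‖q.1 - p.1‖ := by
          simpa using Complex.abs_im_le_norm (q.1 - p.1)
      _ = dist q.1 p.1 := (Complex.dist_eq _ _).symm
      _ ≤ dist q p := le_max_left _ _
      _ < ε := by rwa [dist_comm] at hdq
  have hq2' : |q.2| < ε := by rwa [hp2, sub_zero] at h1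
  have him' : |q.1.im| < |p.1.im| + 1 := by
    have := abs_sub_abs_le_abs_sub q.1.im p.1.im
    have hε1 : ε ≤ 1 := min_le_left _ _
    linarith [h2, abs_nonneg p.1.im]
  have hval : |q.2 * q.1.im| < d * Real.pi := by
    rw [abs_mul]
    calc |q.2| * |q.1.im| < ε * (|p.1.im| + 1) := by
          apply mul_lt_mul' (le_of_lt hq2') him' (abs_nonneg _) hε0
      _ ≤ (d * Real.pi / (|p.1.im| + 1)) * (|p.1.im| + 1) :=
          mul_le_mul_of_nonneg_right (min_le_right _ _) (le_of_lt him)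
      _ = d * Real.pi := by field_simp
  have : q.2 * q.1.im = α + n * Real.pi := by linarith [hn]
  rw [this] at hval
  exact absurd hval (not_lt.mpr (key n))
end
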